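/- Fix 0 < κ < K < 1/4. Then there exist an integer n₀ and ε > 0 such that for all n ≥ n₀ and all w = 2ωn with K ≤ ω < 1/4: 2·Σ_{i+j ≤ w, i < κn} C(n,i)·C(n,j) ≤ 2^{-εn}·|B_{2n}(w)|, where B_{2n}(w) is the set of nonzero binary vectors of length 2n of weight at most w. -/

import Mathlib

open Finset
open scoped Classical

set_option maxHeartbeats 1000000

/-- The number of nonzero vectors of `F_2^N` of Hamming weight at most `v` (real radius). -/
noncomputable def ballCardR (N : ℕ) (v : ℝ) : ℕ :=
  (Finset.univ.filter (fun x : Fin N → ZMod 2 => x ≠ 0 ∧ (hammingNorm x : ℝ) ≤ v)).card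

/-- Vandermonde single-term bound. -/
lemma vdm_term (n i j : ℕ) : n.choose i * n.choose j ≤ (2 * n).choose (i + j) := by
  rw [two_mul, Nat.add_choose_eq]
  exact Finset.single_le_sum (f := fun p : ℕ × ℕ => n.choose p.1 * n.choose p.2)
    (fun p _ => Nat.zero_le _) (a := (i, j)) (by simp)

/-- `choose` is monotone below half. -/
lemma choose_mono_half (N : ℕ) {a b : ℕ} (hab : a ≤ b) (hb : 2 * b ≤ N) :
    N.choose a ≤ N.choose b := by
  induction b with
  | zero => simp [Nat.le_zero.mp hab]
  | succ b ih =>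
    rcases Nat.lt_or_ge a (b+1) with h | h
    · have hb' : 2 * b ≤ N := by omega
      refine (ih (by omega) hb').trans (Nat.choose_le_succ_of_lt_half_left ?_)
      omega
    · have : a = b + 1 := by omega
      simp [this]

/-- Doubling bound for `choose` well below half. -/
lemma choose_dbl (N : ℕ) : ∀ d s, 4 * (s + d) ≤ N → N.choose s * 2 ^ d ≤ N.choose (s + d) := by
  intro d
  induction d with
  | zero => intro s _; simp
  | succ d ih =>
    intro s h
    have hstep : N.choose s * 2 ≤ N.choose (s + 1) := by
      have hkey := Nat.choose_succ_right_eq N s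
      have h1 : N.choose s * 2 * (s + 1) ≤ N.choose s * (N - s) := by
        calc N.choose s * 2 * (s+1) = N.choose s * (2 * (s+1)) := by ring
        _ ≤ N.choose s * (N - s) := Nat.mul_le_mul_left _ (by omega)
      have := h1.trans_eq hkey.symm
      exact Nat.le_of_mul_le_mul_right (by simpa [Nat.mul_comm] using this) (Nat.succ_pos s)
    calc N.choose s * 2 ^ (d+1) = (N.choose s * 2) * 2 ^ d := by ring
    _ ≤ N.choose (s+1) * 2 ^ d := Nat.mul_le_mul_right _ hstep
    _ ≤ N.choose (s + 1 + d) := ih (s+1) (by omega)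
    _ = N.choose (s + (d+1)) := by ring_nf

/-- Real cast of the absorption identity. -/
lemma choose_id_real (n k : ℕ) (hk : k ≤ n) :
    (n.choose (k+1) : ℝ) * (k + 1) = (n.choose k : ℝ) * ((n : ℝ) - k) := by
  have := Nat.choose_succ_right_eq n k
  have hcast : ((n - k : ℕ) : ℝ) = (n : ℝ) - k := by
    rw [Nat.cast_sub hk]
  calc (n.choose (k+1) : ℝ) * (k + 1) = ((n.choose (k+1) * (k+1) : ℕ) : ℝ) := by push_cast; ring
  _ = ((n.choose k * (n - k) : ℕ) : ℝ) := by rw [this]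
  _ = (n.choose k : ℝ) * ((n : ℝ) - k) := by push_cast [hcast]; ring

lemma unbalance_step (n i j : ℕ) (ρ : ℝ) (hρ : 0 ≤ ρ) (hi : i + 1 ≤ n) (hj1 : 1 ≤ j)
    (hjn : j ≤ n)
    (h : ((i:ℝ) + 1) * ((n:ℝ) - j + 1) ≤ ρ * (((n:ℝ) - i) * (j:ℝ))) :
    (n.choose i : ℝ) * n.choose j ≤ ρ * ((n.choose (i+1) : ℝ) * n.choose (j-1)) := by
  have hid1 : (n.choose (i+1) : ℝ) * (i + 1) = (n.choose i : ℝ) * ((n : ℝ) - i) :=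
    choose_id_real n i (by omega)
  have hid2 : (n.choose j : ℝ) * (j:ℝ) = (n.choose (j-1) : ℝ) * ((n : ℝ) - j + 1) := by
    have := choose_id_real n (j-1) (by omega)
    have hj : (j - 1) + 1 = j := by omega
    rw [hj] at this
    have hcast : ((j - 1 : ℕ) : ℝ) = (j : ℝ) - 1 := by
      rw [Nat.cast_sub hj1]; norm_num
    rw [hcast] at this
    calc (n.choose j : ℝ) * (j:ℝ) = (n.choose j : ℝ) * (((j:ℝ) - 1) + 1) := by ring
    _ = (n.choose (j-1) : ℝ) * ((n:ℝ) - ((j:ℝ)-1)) := this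
    _ = (n.choose (j-1) : ℝ) * ((n : ℝ) - j + 1) := by ring
  have hpos : (0:ℝ) < ((n:ℝ) - i) * (j:ℝ) := by
    have : (i:ℝ) < (n:ℝ) := by exact_mod_cast hi
    have : (0:ℝ) < (n:ℝ) - i := by linarith
    have hj0 : (0:ℝ) < (j:ℝ) := by exact_mod_cast hj1
    positivity
  rw [← mul_le_mul_iff_of_pos_right hpos]
  have hkey : (n.choose i : ℝ) * n.choose j * (((n:ℝ) - i) * (j:ℝ))
      = ((n.choose (i+1) : ℝ) * n.choose (j-1)) * (((i:ℝ) + 1) * ((n:ℝ) - j + 1)) := by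
    calc (n.choose i : ℝ) * n.choose j * (((n:ℝ) - i) * (j:ℝ))
        = ((n.choose i : ℝ) * ((n:ℝ) - i)) * ((n.choose j : ℝ) * (j:ℝ)) := by ring
    _ = ((n.choose (i+1) : ℝ) * (i + 1)) * ((n.choose (j-1) : ℝ) * ((n : ℝ) - j + 1)) := by
        rw [hid1, hid2]
    _ = ((n.choose (i+1) : ℝ) * n.choose (j-1)) * (((i:ℝ) + 1) * ((n:ℝ) - j + 1)) := by ring
  rw [hkey]
  have hcnn : (0:ℝ) ≤ (n.choose (i+1) : ℝ) * n.choose (j-1) := by positivity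
  calc ((n.choose (i+1) : ℝ) * n.choose (j-1)) * (((i:ℝ) + 1) * ((n:ℝ) - j + 1))
      ≤ ((n.choose (i+1) : ℝ) * n.choose (j-1)) * (ρ * (((n:ℝ) - i) * (j:ℝ))) :=
        mul_le_mul_of_nonneg_left h hcnn
  _ = ρ * ((n.choose (i+1) : ℝ) * n.choose (j-1)) * (((n:ℝ) - i) * (j:ℝ)) := by ring

lemma unbalance_chain (n : ℕ) (ρ : ℝ) (hρ : 0 ≤ ρ) :
    ∀ m i j, i + m ≤ n → m ≤ j → j ≤ n →
    (∀ u, u < m → ((i:ℝ) + u + 1) * ((n:ℝ) - ((j:ℝ) - u) + 1)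
        ≤ ρ * (((n:ℝ) - ((i:ℝ) + u)) * ((j:ℝ) - u))) →
    (n.choose i : ℝ) * n.choose j ≤ ρ ^ m * ((n.choose (i+m) : ℝ) * n.choose (j-m)) := by
  intro m
  induction m with
  | zero => intro i j _ _ _ _; simp
  | succ m ih =>
    intro i j him hmj hjn h
    have hstep : (n.choose i : ℝ) * n.choose j ≤ ρ * ((n.choose (i+1) : ℝ) * n.choose (j-1)) := by
      refine unbalance_step n i j ρ hρ (by omega) (by omega) hjn ?_
      have := h 0 (by omega)
      push_cast at this ⊢
      convert this using 2 <;> ring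
    have hIH : (n.choose (i+1) : ℝ) * n.choose (j-1)
        ≤ ρ ^ m * ((n.choose (i+1+m) : ℝ) * n.choose (j-1-m)) := by
      refine ih (i+1) (j-1) (by omega) (by omega) (by omega) ?_
      intro u hu
      have := h (u+1) (by omega)
      have hc1 : ((i+1:ℕ):ℝ) = (i:ℝ) + 1 := by push_cast; ring
      have hc2 : ((j-1:ℕ):ℝ) = (j:ℝ) - 1 := by
        rw [Nat.cast_sub (by omega)]; norm_num
      rw [hc1, hc2]
      convert this using 2 <;> push_cast <;> ring
    have h1 : i + 1 + m = i + (m+1) := by omega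
    have h2 : j - 1 - m = j - (m+1) := by omega
    rw [h1, h2] at hIH
    calc (n.choose i : ℝ) * n.choose j ≤ ρ * ((n.choose (i+1) : ℝ) * n.choose (j-1)) := hstep
    _ ≤ ρ * (ρ ^ m * ((n.choose (i+(m+1)) : ℝ) * n.choose (j-(m+1)))) :=
        mul_le_mul_of_nonneg_left hIH hρ
    _ = ρ ^ (m+1) * ((n.choose (i+(m+1)) : ℝ) * n.choose (j-(m+1))) := by ring

lemma choose_le_ballCardR (N k : ℕ) (hk : 1 ≤ k) (hkN : k ≤ N) (v : ℝ) (hv : (k:ℝ) ≤ v) :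
    N.choose k ≤ ballCardR N v := by
  classical
  have hcard : ((Finset.univ : Finset (Fin N)).powersetCard k).card = N.choose k := by
    rw [Finset.card_powersetCard, Finset.card_univ, Fintype.card_fin]
  rw [← hcard, ballCardR]
  apply Finset.card_le_card_of_injOn (fun S => fun i => if i ∈ S then (1 : ZMod 2) else 0)
  · intro S hS
    rw [Finset.mem_coe, Finset.mem_powersetCard] at hS
    obtain ⟨-, hSc⟩ := hS
    have hnorm : hammingNorm (fun i => if i ∈ S then (1 : ZMod 2) else 0) = k := by
      rw [← hSc, hammingNorm]
      congr 1
      ext i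
      simp only [Finset.mem_filter, Finset.mem_univ, true_and]
      by_cases hi : i ∈ S <;> simp [hi]
    simp only [Finset.coe_filter, Set.mem_setOf_eq, Finset.mem_filter, Finset.mem_univ, true_and]
    constructor
    · intro hzero
      obtain ⟨i, hi⟩ := Finset.card_pos.mp (by omega : 0 < S.card)
      have := congrFun hzero i
      simp [hi] at this
    · rw [hnorm]; exact hv
  · intro S hS T hT hST
    ext i
    have := congrFun hST i
    by_cases hiS : i ∈ S <;> by_cases hiT : i ∈ T <;> simp [hiS, hiT] at this ⊢

/-- Lemma 6 of the paper: for fixed `0 < κ < K < 1/4` there are `n₀` and `ε > 0` such that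
for all `n ≥ n₀` and `w = 2ωn` with `K ≤ ω < 1/4`,
`2 Σ_{i+j ≤ w, i < κn} C(n,i) C(n,j) ≤ 2^{-εn} |B_{2n}(w)|`. -/
theorem unbalanced_terms_bound (κ K : ℝ) (h0 : 0 < κ) (h1 : κ < K) (h2 : K < 1 / 4) :
    ∃ n₀ : ℕ, ∃ ε : ℝ, 0 < ε ∧
      ∀ n : ℕ, n₀ ≤ n → ∀ ω : ℝ, K ≤ ω → ω < 1 / 4 →
        2 * ∑ q ∈ (Finset.range (n + 1) ×ˢ Finset.range (n + 1)).filter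
              (fun q => (q.1 : ℝ) + (q.2 : ℝ) ≤ 2 * ω * n ∧ (q.1 : ℝ) < κ * n),
            ((n.choose q.1 : ℝ) * (n.choose q.2 : ℝ)) ≤
          (2 : ℝ) ^ (-(ε * n)) * (ballCardR (2 * n) (2 * ω * n) : ℝ) := by
  classical
  set γ : ℝ := (K - κ) / 8 with hγdef
  have hγ : 0 < γ := by simp only [hγdef]; linarith
  set δ : ℝ := 4 * γ with hδdef
  set P : ℝ := κ + 5 * γ with hPdef
  set Q : ℝ := 1 - κ - 6 * γ with hQdef
  set R : ℝ := 1 - κ - 5 * γ with hRdef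
  set S : ℝ := κ + 7 * γ with hSdef
  have hκ4 : κ < 1/4 := lt_trans h1 h2
  have hγ8 : 8 * γ = K - κ := by simp [hγdef]; ring
  have hγ32 : γ < 1 / 32 := by simp only [hγdef]; linarith
  have hP0 : 0 < P := by simp only [hPdef]; linarith
  have hQ0 : 0 < Q := by simp only [hQdef]; linarith
  have hR0 : 0 < R := by simp only [hRdef]; linarith
  have hS0 : 0 < S := by simp only [hSdef]; linarith
  set ρ : ℝ := P * Q / (R * S) with hρdef
  have hρ0 : 0 ≤ ρ := by positivity
  have hρRS : ρ * (R * S) = P * Q := div_mul_cancel₀ _ (by positivity)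
  have hρ1 : ρ < 1 := by
    rw [hρdef, div_lt_one (by positivity)]
    simp only [hPdef, hQdef, hRdef, hSdef]
    have h25 : (0:ℝ) < 2 - κ - 5 * γ := by linarith
    have hid : (1 - κ - 5*γ) * (κ + 7*γ) - (κ + 5*γ) * (1 - κ - 6*γ) = γ * (2 - κ - 5*γ) := by
      ring
    linarith [mul_pos hγ h25, hid]
  set ρ' : ℝ := max ρ (1/2) with hρ'def
  have hρ'0 : 0 < ρ' := lt_of_lt_of_le (by norm_num) (le_max_right _ _)
  have hρ'1 : ρ' < 1 := max_lt hρ1 (by norm_num)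
  have hρρ' : ρ ≤ ρ' := le_max_left _ _
  have hhρ' : (1:ℝ)/2 ≤ ρ' := le_max_right _ _
  set L : ℝ := Real.logb 2 ρ' with hLdef
  have hL : L < 0 := Real.logb_neg (by norm_num) hρ'0 hρ'1
  set ε : ℝ := δ * (-L) / 2 with hεdef
  have hε : 0 < ε := by
    have : 0 < δ := by simp [hδdef]; linarith
    have : 0 < -L := by linarith
    positivity
  -- eventually conditions
  have Ev1 : ∀ᶠ n : ℕ in Filter.atTop, (2:ℝ) ≤ γ * n := by
    have h := (tendsto_natCast_atTop_atTop (R := ℝ)).const_mul_atTop hγ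
    exact h.eventually_ge_atTop 2
  have hr1 : (1:ℝ) < (2:ℝ) ^ ε := by
    rw [show ((2:ℝ) ^ ε) = (2:ℝ) ^ (ε:ℝ) from rfl]
    exact Real.one_lt_rpow_iff_of_pos (by norm_num) |>.mpr (Or.inl ⟨by norm_num, hε⟩)
  have Ev3 : ∀ᶠ n : ℕ in Filter.atTop, 2 * ((n:ℝ) + 1)^2 ≤ ((2:ℝ) ^ ε) ^ n := by
    have hlo := isLittleO_pow_const_const_pow_of_one_lt (R := ℝ) 2 hr1
    have h8 := hlo.def (by norm_num : (0:ℝ) < 1/8)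
    filter_upwards [h8, Filter.eventually_ge_atTop 1] with n hn hn1
    have hrpos : (0:ℝ) < ((2:ℝ) ^ ε) ^ n := by positivity
    rw [Real.norm_eq_abs, Real.norm_eq_abs, abs_of_nonneg (by positivity),
      abs_of_nonneg hrpos.le] at hn
    have hn1' : (1:ℝ) ≤ (n:ℝ) := by exact_mod_cast hn1
    have hid : 8*(n:ℝ)^2 - 2*((n:ℝ)+1)^2 = 6*((n:ℝ)-1)^2 + 8*(n:ℝ) - 8 := by ring
    linarith [sq_nonneg ((n:ℝ) - 1), hn, hid]
  obtain ⟨n₀, hn₀⟩ := Filter.eventually_atTop.mp (Ev1.and Ev3)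
  refine ⟨max n₀ 1, ε, hε, ?_⟩
  intro n hn ω hKω hω4
  obtain ⟨hγn, hEv3⟩ := hn₀ n (le_trans (le_max_left _ _) hn)
  have hn1 : 1 ≤ n := le_trans (le_max_right _ _) hn
  have hn1' : (1:ℝ) ≤ (n:ℝ) := by exact_mod_cast hn1
  set w : ℝ := 2 * ω * n with hwdef
  have hω0 : 0 < ω := lt_of_lt_of_le (lt_trans h0 h1) hKω
  have hw0 : 0 ≤ w := by positivity
  have hKn : 2 * K * n ≤ w := by
    have h := mul_le_mul_of_nonneg_right hKω (by positivity : (0:ℝ) ≤ (n:ℝ))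
    simp only [hwdef]
    linarith
  have hγK : γ ≤ K := by simp only [hγdef]; linarith
  have hγn2 : (2:ℝ) ≤ K * n :=
    le_trans hγn (mul_le_mul_of_nonneg_right hγK (by positivity))
  set s' : ℕ := ⌊w⌋₊ with hs'def
  set m : ℕ := ⌈δ * (n:ℝ)⌉₊ with hmdef
  have hs'w : (s' : ℝ) ≤ w := Nat.floor_le hw0
  have hws' : w - 1 < (s' : ℝ) := by
    have := Nat.lt_floor_add_one w
    linarith
  have hm1 : δ * n ≤ (m : ℝ) := Nat.le_ceil _
  have hm2 : (m : ℝ) ≤ δ * n + 1 := by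
    have := Nat.ceil_lt_add_one (by positivity : (0:ℝ) ≤ δ * n)
    linarith
  have hδγ : δ * (n:ℝ) = 4 * (γ * n) := by simp only [hδdef]; ring
  have hm2' : (m : ℝ) ≤ 5 * (γ * n) := by rw [hδγ] at hm2; linarith
  have hs'1 : 1 ≤ s' := Nat.le_floor (by push_cast; linarith)
  have hn0 : (0:ℝ) < (n:ℝ) := by exact_mod_cast hn1
  have hωn : ω * n < (1/4) * n := mul_lt_mul_of_pos_right hω4 hn0
  have h4s' : 4 * s' ≤ 2 * n := by
    have hlt : (4 * s' : ℝ) < (2 * n : ℝ) := by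
      have hsw : (s':ℝ) ≤ w := hs'w
      simp only [hwdef] at hsw
      push_cast
      linarith [hωn, hsw]
    exact_mod_cast hlt.le
  have hs'n : s' ≤ n := by omega
  have hball : ((2*n).choose s' : ℝ) ≤ (ballCardR (2 * n) w : ℝ) := by
    exact_mod_cast choose_le_ballCardR (2*n) s' hs'1 (by omega) w hs'w
  -- the per-term bound
  set F := (Finset.range (n + 1) ×ˢ Finset.range (n + 1)).filter
      (fun q : ℕ × ℕ => (q.1 : ℝ) + (q.2 : ℝ) ≤ 2 * ω * n ∧ (q.1 : ℝ) < κ * n) with hFdef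
  have hterm : ∀ q ∈ F, ((n.choose q.1 : ℝ) * (n.choose q.2 : ℝ))
      ≤ ρ' ^ m * ((2*n).choose s' : ℝ) := by
    rintro ⟨i, j⟩ hq
    simp only [hFdef, Finset.mem_filter, Finset.mem_product, Finset.mem_range] at hq
    obtain ⟨⟨hin, hjn⟩, hij, hiκ⟩ := hq
    have hin' : i ≤ n := by omega
    have hjn' : j ≤ n := by omega
    have hsle : i + j ≤ s' := Nat.le_floor (by push_cast; push_cast at hij; linarith)
    have hchoose_nonneg : (0:ℝ) ≤ ((2*n).choose s' : ℝ) := by positivity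
    rcases le_or_gt (i + j + m) s' with hA | hB
    · -- Case A : far below the boundary
      have hd : i + j + (s' - (i+j)) = s' := by omega
      have hnat : n.choose i * n.choose j * 2 ^ (s' - (i+j)) ≤ (2*n).choose s' := by
        calc n.choose i * n.choose j * 2 ^ (s' - (i+j))
            ≤ (2*n).choose (i+j) * 2 ^ (s' - (i+j)) :=
              Nat.mul_le_mul_right _ (vdm_term n i j)
        _ ≤ (2*n).choose (i + j + (s' - (i+j))) := choose_dbl (2*n) _ _ (by omega)
        _ = (2*n).choose s' := by rw [hd]
      have hreal : ((n.choose i : ℝ) * (n.choose j : ℝ)) * 2 ^ (s' - (i+j))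
          ≤ ((2*n).choose s' : ℝ) := by exact_mod_cast hnat
      have hhalf : ((1:ℝ)/2) ^ (s' - (i+j)) ≤ ((1:ℝ)/2) ^ m :=
        pow_le_pow_of_le_one (by norm_num) (by norm_num) (by omega)
      have h2pos : (0:ℝ) < 2 ^ (s' - (i+j)) := by positivity
      have e1 : (n.choose i : ℝ) * (n.choose j : ℝ)
          ≤ ((2*n).choose s' : ℝ) * ((1:ℝ)/2) ^ (s' - (i+j)) := by
        rw [div_pow, one_pow, mul_one_div, le_div_iff₀ h2pos]
        exact hreal
      calc (n.choose i : ℝ) * (n.choose j : ℝ)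
          ≤ ((2*n).choose s' : ℝ) * ((1:ℝ)/2) ^ (s' - (i+j)) := e1
      _ ≤ ((2*n).choose s' : ℝ) * ((1:ℝ)/2) ^ m :=
          mul_le_mul_of_nonneg_left hhalf hchoose_nonneg
      _ ≤ ((2*n).choose s' : ℝ) * ρ' ^ m :=
          mul_le_mul_of_nonneg_left (pow_le_pow_left₀ (by norm_num) hhρ' m) hchoose_nonneg
      _ = ρ' ^ m * ((2*n).choose s' : ℝ) := by ring
    · -- Case B : near the boundary, unbalanced pair
      have hiκ' : (i:ℝ) < κ * n := hiκ
      have hs'IJ : (s':ℝ) + 1 ≤ (i:ℝ) + j + m := by exact_mod_cast Nat.succ_le_of_lt hB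
      have hKnγ : K * n = κ * n + 8 * (γ * n) := by simp only [hγdef]; ring
      have hκn0 : (0:ℝ) ≤ κ * n := by positivity
      have hJlb : κ * n + 8 * (γ * n) - 2 ≤ (j:ℝ) := by
        have hj1 : (j:ℝ) ≥ (s':ℝ) + 1 - (m:ℝ) - (i:ℝ) := by linarith
        have hwlb : 2*K*n - 1 < (s':ℝ) := by linarith [hws', hKn]
        linarith [hm2', hγn, hiκ', hKnγ]
      have hmj : m ≤ j := by
        have : (m:ℝ) ≤ (j:ℝ) := by linarith [hm2', hγn, hJlb, hκn0]
        exact_mod_cast this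
      have him : i + m ≤ n := by
        have hone : (κ + 5*γ) * n ≤ 1 * n := by
          apply mul_le_mul_of_nonneg_right _ hn0.le
          simp only [hγdef]; linarith
        have : (i:ℝ) + m ≤ (n:ℝ) := by linarith [hm2', hγn, hone, hiκ']
        exact_mod_cast this
      have hchain := unbalance_chain n ρ hρ0 m i j him hmj hjn' ?_
      · calc (n.choose i : ℝ) * (n.choose j : ℝ)
            ≤ ρ ^ m * ((n.choose (i+m) : ℝ) * n.choose (j-m)) := hchain
        _ ≤ ρ ^ m * ((2*n).choose s' : ℝ) := by
            apply mul_le_mul_of_nonneg_left _ (by positivity)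
            have hv : n.choose (i+m) * n.choose (j-m) ≤ (2*n).choose ((i+m) + (j-m)) :=
              vdm_term n _ _
            have heq : (i+m) + (j-m) = i + j := by omega
            rw [heq] at hv
            have hmono : (2*n).choose (i+j) ≤ (2*n).choose s' :=
              choose_mono_half (2*n) hsle (by omega)
            exact_mod_cast le_trans hv hmono
        _ ≤ ρ' ^ m * ((2*n).choose s' : ℝ) :=
            mul_le_mul_of_nonneg_right (pow_le_pow_left₀ hρ0 hρρ' m) hchoose_nonneg
      · intro u hu
        have hu' : (u:ℝ) ≤ (m:ℝ) - 1 := by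
          have : (u:ℝ) + 1 ≤ (m:ℝ) := by exact_mod_cast Nat.succ_le_of_lt hu
          linarith
        have hγn1 : (1:ℝ) ≤ γ * n := by linarith
        have b1 : (i:ℝ) + u + 1 ≤ P * n := by
          simp only [hPdef]
          have : P * n = κ * n + 5 * (γ * n) := by simp only [hPdef]; ring
          linarith [hm2', this, hiκ']
        have b2 : S * n ≤ (j:ℝ) - u := by
          have : S * n = κ * n + 7 * (γ * n) := by simp only [hSdef]; ring
          linarith [hm2', hJlb, this]
        have b3 : (n:ℝ) - ((j:ℝ) - u) + 1 ≤ Q * n := by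
          have : Q * n = n - (κ * n) - 6 * (γ * n) := by simp only [hQdef]; ring
          have hb2 : κ * n + 7 * (γ * n) ≤ (j:ℝ) - u := by
            have hS : S * n = κ * n + 7 * (γ * n) := by simp only [hSdef]; ring
            linarith [b2, hS]
          linarith
        have b4 : R * n ≤ (n:ℝ) - ((i:ℝ) + u) := by
          have : R * n = n - (κ * n) - 5 * (γ * n) := by simp only [hRdef]; ring
          linarith [hm2', this, hiκ']
        have hnum_nonneg : (0:ℝ) ≤ (i:ℝ) + u + 1 := by positivity
        have hnum2_nonneg : (0:ℝ) ≤ (n:ℝ) - ((j:ℝ) - u) + 1 := by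
          have : (j:ℝ) ≤ (n:ℝ) := by exact_mod_cast hjn'
          have : (0:ℝ) ≤ (u:ℝ) := by positivity
          linarith
        calc ((i:ℝ) + u + 1) * ((n:ℝ) - ((j:ℝ) - u) + 1)
            ≤ (P * n) * (Q * n) := mul_le_mul b1 b3 hnum2_nonneg (by positivity)
        _ = (P * Q) * ((n:ℝ) * n) := by ring
        _ = (ρ * (R * S)) * ((n:ℝ) * n) := by rw [hρRS]
        _ = ρ * ((R * n) * (S * n)) := by ring
        _ ≤ ρ * (((n:ℝ) - ((i:ℝ) + u)) * ((j:ℝ) - u)) := by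
            apply mul_le_mul_of_nonneg_left _ hρ0
            exact mul_le_mul b4 b2 (by positivity) (by linarith [b4, hR0.le,
              (by positivity : (0:ℝ) ≤ R * (n:ℝ))])
  -- sum the term bounds
  have hsum : ∑ q ∈ F, ((n.choose q.1 : ℝ) * (n.choose q.2 : ℝ))
      ≤ ((n+1)^2 : ℝ) * (ρ' ^ m * ((2*n).choose s' : ℝ)) := by
    calc ∑ q ∈ F, ((n.choose q.1 : ℝ) * (n.choose q.2 : ℝ))
        ≤ F.card • (ρ' ^ m * ((2*n).choose s' : ℝ)) := Finset.sum_le_card_nsmul F _ _ hterm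
    _ = (F.card : ℝ) * (ρ' ^ m * ((2*n).choose s' : ℝ)) := by rw [nsmul_eq_mul]
    _ ≤ ((n+1)^2 : ℝ) * (ρ' ^ m * ((2*n).choose s' : ℝ)) := by
        apply mul_le_mul_of_nonneg_right _ (by positivity)
        have : F.card ≤ (n+1)^2 := by
          calc F.card ≤ ((Finset.range (n + 1) ×ˢ Finset.range (n + 1))).card :=
              Finset.card_filter_le _ _
          _ = (n+1)^2 := by rw [Finset.card_product, Finset.card_range]; ring
        exact_mod_cast this
  -- the exponential gain
  have hexp : 2 * (((n:ℝ)+1)^2 * ρ' ^ m) ≤ (2:ℝ) ^ (-(ε * n)) := by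
    have hρ'm : ρ' ^ m ≤ (2:ℝ) ^ (-(2 * ε * n)) := by
      have h1 : ρ' ^ m = (2:ℝ) ^ (L * (m:ℝ)) := by
        have hb : (2:ℝ) ^ L = ρ' := Real.rpow_logb (by norm_num) (by norm_num) hρ'0
        rw [← hb, ← Real.rpow_natCast ((2:ℝ) ^ L) m, ← Real.rpow_mul (by norm_num)]
      rw [h1]
      apply Real.rpow_le_rpow_of_exponent_le (by norm_num)
      calc L * m ≤ L * (δ * n) := mul_le_mul_of_nonpos_left hm1 hL.le
      _ = -(2 * ε * n) := by simp only [hεdef]; ring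
    have h2' : ((2:ℝ)^ε)^n = (2:ℝ) ^ (ε * n) := by
      rw [← Real.rpow_natCast ((2:ℝ) ^ ε) n, ← Real.rpow_mul (by norm_num)]
    have hEv3' : 2 * ((n:ℝ)+1)^2 ≤ (2:ℝ) ^ (ε * n) := by rw [← h2']; exact hEv3
    calc 2 * (((n:ℝ)+1)^2 * ρ' ^ m) = (2 * ((n:ℝ)+1)^2) * ρ' ^ m := by ring
    _ ≤ (2:ℝ) ^ (ε * n) * (2:ℝ) ^ (-(2 * ε * n)) := by
        apply mul_le_mul hEv3' hρ'm (by positivity) (by positivity)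
    _ = (2:ℝ) ^ (-(ε * n)) := by
        rw [← Real.rpow_add (by norm_num)]
        ring_nf
  -- put everything together
  calc 2 * ∑ q ∈ F, ((n.choose q.1 : ℝ) * (n.choose q.2 : ℝ))
      ≤ 2 * (((n:ℝ)+1)^2 * (ρ' ^ m * ((2*n).choose s' : ℝ))) := by
        apply mul_le_mul_of_nonneg_left _ (by norm_num)
        exact_mod_cast hsum
  _ = (2 * (((n:ℝ)+1)^2 * ρ' ^ m)) * ((2*n).choose s' : ℝ) := by ring
  _ ≤ (2:ℝ) ^ (-(ε * n)) * ((2*n).choose s' : ℝ) := by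
      apply mul_le_mul_of_nonneg_right hexp (by positivity)
  _ ≤ (2:ℝ) ^ (-(ε * n)) * (ballCardR (2 * n) w : ℝ) :=
      mul_le_mul_of_nonneg_left hball (by positivity)
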